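/- The function D(λ) = 2(1 − Gd(|λ|)/sinh(|λ|)), where Gd(x) = 2 arctan(eˣ) − π/2 is the Gudermannian function, satisfies: (a) D(λ) → 0 as λ → 0, with D(λ) = (2/3)λ² + O(λ⁴); (b) D is monotonically increasing on (0,∞); and (c) lim_{λ→∞} D(λ) = 2. -/

import Mathlib

open Real Filter Asymptotics

/-- The Gudermannian function `Gd(x) = 2 arctan(eˣ) − π/2`. -/
noncomputable def Gd (x : ℝ) : ℝ := 2 * Real.arctan (Real.exp x) - Real.pi / 2

/-- The `m → ∞` Mazur lower bound on the spin Drude weight,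
`D(λ) = 2(1 − Gd(|λ|)/sinh(|λ|))`. -/
noncomputable def Denv (l : ℝ) : ℝ := 2 * (1 - Gd |l| / Real.sinh |l|)

lemma gd_deriv (x : ℝ) : HasDerivAt Gd (Real.cosh x)⁻¹ x := by
  have h1 : HasDerivAt Gd (2 * (1 / (1 + Real.exp x ^ 2) * Real.exp x)) x := by
    have := (((Real.hasDerivAt_arctan (Real.exp x)).comp x (Real.hasDerivAt_exp x)).const_mul 2).sub_const (Real.pi / 2)
    exact this
  convert h1 using 1
  rw [Real.cosh_eq, Real.exp_neg]
  have h := Real.exp_pos x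
  have h2 : (1 : ℝ) + Real.exp x ^ 2 > 0 := by positivity
  field_simp
  ring

lemma gd_zero : Gd 0 = 0 := by
  simp [Gd, Real.arctan_one]
  ring

lemma gd_cont : Continuous Gd :=
  (continuous_const.mul (Real.continuous_arctan.comp Real.continuous_exp)).sub continuous_const

lemma gd_mono : StrictMono Gd :=
  strictMono_of_hasDerivAt_pos (f' := fun x => (Real.cosh x)⁻¹) gd_deriv
    (fun x => by positivity)

lemma gd_pos {x : ℝ} (hx : 0 < x) : 0 < Gd x := by
  have := gd_mono hx
  rwa [gd_zero] at this

lemma gd_lt (x : ℝ) : Gd x < Real.pi / 2 := by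
  have := Real.arctan_lt_pi_div_two (Real.exp x)
  unfold Gd; linarith

lemma gd_nonneg {x : ℝ} (hx : 0 ≤ x) : 0 ≤ Gd x := by
  rcases hx.eq_or_lt with h | h
  · simp [← h, gd_zero]
  · exact (gd_pos h).le

-- sinh x ≤ x * cosh x for x ≥ 0
lemma sinh_le_mul_cosh {x : ℝ} (hx : 0 ≤ x) : Real.sinh x ≤ x * Real.cosh x := by
  have key : MonotoneOn (fun y : ℝ => y * Real.cosh y - Real.sinh y) (Set.Ici 0) := by
    apply monotoneOn_of_deriv_nonneg (convex_Ici 0)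
    · fun_prop
    · intro y hy
      exact (((hasDerivAt_id' (x := y)).mul (Real.hasDerivAt_cosh y)).sub (Real.hasDerivAt_sinh y)).differentiableAt.differentiableWithinAt
    · intro y hy
      rw [interior_Ici, Set.mem_Ioi] at hy
      have hd := ((hasDerivAt_id' (x := y)).mul (Real.hasDerivAt_cosh y)).sub (Real.hasDerivAt_sinh y)
      rw [show deriv (fun y : ℝ => y * Real.cosh y - Real.sinh y) y = _ from hd.deriv]
      have : 0 ≤ Real.sinh y := by rw [← Real.sinh_zero]; exact Real.sinh_le_sinh.mpr hy.le
      nlinarith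
  have := key (Set.self_mem_Ici) (Set.mem_Ici.mpr hx) hx
  simp at this
  linarith

-- cosh x ≤ 1 + x^2 on [0,1]
lemma cosh_le_one_add_sq {x : ℝ} (hx : 0 ≤ x) (hx1 : x ≤ 1) : Real.cosh x ≤ 1 + x ^ 2 := by
  have hc1 : Real.cosh 1 ≤ 2 := by
    rw [Real.cosh_eq]
    have h1 : Real.exp 1 < 2.7182818286 := Real.exp_one_lt_d9
    have h2 : Real.exp (-1) < 1 := by
      rw [Real.exp_lt_one_iff]; norm_num
    linarith
  have key : MonotoneOn (fun y : ℝ => 1 + y ^ 2 - Real.cosh y) (Set.Icc 0 1) := by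
    apply monotoneOn_of_deriv_nonneg (convex_Icc 0 1)
    · fun_prop
    · intro y hy
      exact ((((hasDerivAt_id' (x := y)).pow 2).const_add 1).sub (Real.hasDerivAt_cosh y)).differentiableAt.differentiableWithinAt
    · intro y hy
      rw [interior_Icc, Set.mem_Ioo] at hy
      have hd := (((hasDerivAt_id' (x := y)).pow 2).const_add 1).sub (Real.hasDerivAt_cosh y)
      rw [show deriv (fun y : ℝ => 1 + y ^ 2 - Real.cosh y) y = _ from hd.deriv]
      have h1 : Real.sinh y ≤ y * Real.cosh y := sinh_le_mul_cosh hy.1.le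
      have h2 : Real.cosh y ≤ Real.cosh 1 := by
        apply Real.cosh_le_cosh.mpr
        rw [abs_one, abs_of_nonneg hy.1.le]; exact hy.2.le
      norm_num
      nlinarith [hy.1, hy.2]
  have := key (Set.mem_Icc.mpr ⟨le_refl 0, zero_le_one⟩) (Set.mem_Icc.mpr ⟨hx, hx1⟩) hx
  simp [Real.cosh_zero] at this
  linarith

-- A: sinh x * (1 - x^2/3) ≤ Gd x for x ≥ 0
lemma gd_lower {x : ℝ} (hx : 0 ≤ x) : Real.sinh x * (1 - x ^ 2 / 3) ≤ Gd x := by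
  have hd : ∀ y : ℝ, HasDerivAt (fun z : ℝ => Gd z - Real.sinh z * (1 - z ^ 2 / 3))
      ((Real.cosh y)⁻¹ - (Real.cosh y * (1 - y ^ 2 / 3) + Real.sinh y * (-(2 * y) / 3))) y := by
    intro y
    have h1 : HasDerivAt (fun z : ℝ => 1 - z ^ 2 / 3) (-(2 * y) / 3) y := by
      have := (((hasDerivAt_id' (x := y)).pow 2).div_const 3).const_sub 1
      refine this.congr_deriv ?_
      norm_num; ring
    exact (gd_deriv y).sub ((Real.hasDerivAt_sinh y).mul h1)
  have key : MonotoneOn (fun z : ℝ => Gd z - Real.sinh z * (1 - z ^ 2 / 3)) (Set.Ici 0) := by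
    apply monotoneOn_of_deriv_nonneg (convex_Ici 0)
    · exact (gd_cont.sub (Real.continuous_sinh.mul (by fun_prop))).continuousOn
    · intro y _; exact (hd y).differentiableAt.differentiableWithinAt
    · intro y hy
      rw [interior_Ici, Set.mem_Ioi] at hy
      rw [(hd y).deriv]
      have hc : 0 < Real.cosh y := Real.cosh_pos y
      have hs : 0 ≤ Real.sinh y := by rw [← Real.sinh_zero]; exact Real.sinh_le_sinh.mpr hy.le
      have h1 : Real.sinh y ≤ y * Real.cosh y := sinh_le_mul_cosh hy.le
      rw [sub_nonneg, show (Real.cosh y)⁻¹ = 1 / Real.cosh y from (one_div _).symm,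
        le_div_iff₀ hc]
      have hc2 : Real.cosh y ^ 2 - Real.sinh y ^ 2 = 1 := Real.cosh_sq_sub_sinh_sq y
      nlinarith [mul_nonneg (mul_nonneg hc.le hy.le) (sub_nonneg.mpr h1),
        mul_nonneg hs (sub_nonneg.mpr h1)]
  have := key (Set.self_mem_Ici) (Set.mem_Ici.mpr hx) hx
  simp [gd_zero] at this
  linarith

-- B: Gd x ≤ sinh x * (1 - x^2/3 + x^4) for x ∈ [0,1]
lemma gd_upper {x : ℝ} (hx : 0 ≤ x) (hx1 : x ≤ 1) :
    Gd x ≤ Real.sinh x * (1 - x ^ 2 / 3 + x ^ 4) := by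
  have hd : ∀ y : ℝ, HasDerivAt (fun z : ℝ => Real.sinh z * (1 - z ^ 2 / 3 + z ^ 4) - Gd z)
      ((Real.cosh y * (1 - y ^ 2 / 3 + y ^ 4) + Real.sinh y * (-(2 * y) / 3 + 4 * y ^ 3))
        - (Real.cosh y)⁻¹) y := by
    intro y
    have h1 : HasDerivAt (fun z : ℝ => 1 - z ^ 2 / 3 + z ^ 4) (-(2 * y) / 3 + 4 * y ^ 3) y := by
      have := ((((hasDerivAt_id' (x := y)).pow 2).div_const 3).const_sub 1).add
        ((hasDerivAt_id' (x := y)).pow 4)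
      refine this.congr_deriv ?_
      norm_num; ring
    exact ((Real.hasDerivAt_sinh y).mul h1).sub (gd_deriv y)
  have key : MonotoneOn (fun z : ℝ => Real.sinh z * (1 - z ^ 2 / 3 + z ^ 4) - Gd z) (Set.Icc 0 1) := by
    apply monotoneOn_of_deriv_nonneg (convex_Icc 0 1)
    · exact ((Real.continuous_sinh.mul (by fun_prop)).sub gd_cont).continuousOn
    · intro y _; exact (hd y).differentiableAt.differentiableWithinAt
    · intro y hy
      rw [interior_Icc, Set.mem_Ioo] at hy
      rw [(hd y).deriv]
      have hc : 0 < Real.cosh y := Real.cosh_pos y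
      have hs : y ≤ Real.sinh y := (Real.self_lt_sinh_iff.mpr hy.1).le
      have h1 : Real.sinh y ≤ y * Real.cosh y := sinh_le_mul_cosh hy.1.le
      have h2 : Real.cosh y ≤ 1 + y ^ 2 := cosh_le_one_add_sq hy.1.le hy.2.le
      have h3 : 1 ≤ Real.cosh y := Real.one_le_cosh y
      rw [sub_nonneg, show (Real.cosh y)⁻¹ = 1 / Real.cosh y from (one_div _).symm,
        div_le_iff₀ hc]
      have hc2 : Real.cosh y ^ 2 - Real.sinh y ^ 2 = 1 := Real.cosh_sq_sub_sinh_sq y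
      have hy1 : 0 < y := hy.1
      have hy2 : y < 1 := hy.2
      nlinarith [mul_nonneg (mul_nonneg hc.le hy1.le) (sub_nonneg.mpr h1),
        mul_nonneg (le_trans hy1.le hs) (sub_nonneg.mpr h1),
        sq_nonneg y, sq_nonneg (y * Real.cosh y), mul_pos hc hc,
        pow_le_pow_left₀ hy1.le hy2.le 2]
  have := key (Set.mem_Icc.mpr ⟨le_refl 0, zero_le_one⟩) (Set.mem_Icc.mpr ⟨hx, hx1⟩) hx
  simp [gd_zero] at this
  linarith

-- h(x) = sinh x - Gd x * cosh x ^ 2 < 0 for x > 0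
lemma h_neg {x : ℝ} (hx : 0 < x) : Real.sinh x - Gd x * Real.cosh x ^ 2 < 0 := by
  have hd : ∀ y : ℝ, HasDerivAt (fun z : ℝ => Real.sinh z - Gd z * Real.cosh z ^ 2)
      (Real.cosh y - ((Real.cosh y)⁻¹ * Real.cosh y ^ 2 +
        Gd y * (2 * Real.cosh y * Real.sinh y))) y := by
    intro y
    have h2 : HasDerivAt (fun z : ℝ => Real.cosh z ^ 2) (2 * Real.cosh y * Real.sinh y) y := by
      have := (Real.hasDerivAt_cosh y).pow 2
      refine this.congr_deriv ?_
      norm_num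
      try ring
    exact (Real.hasDerivAt_sinh y).sub ((gd_deriv y).mul h2)
  have key : StrictAntiOn (fun z : ℝ => Real.sinh z - Gd z * Real.cosh z ^ 2) (Set.Ici 0) := by
    apply strictAntiOn_of_deriv_neg (convex_Ici 0)
    · exact (Real.continuous_sinh.sub (gd_cont.mul (Real.continuous_cosh.pow 2))).continuousOn
    · intro y hy
      rw [interior_Ici, Set.mem_Ioi] at hy
      rw [(hd y).deriv]
      have hc : 0 < Real.cosh y := Real.cosh_pos y
      have hinv : (Real.cosh y)⁻¹ * Real.cosh y ^ 2 = Real.cosh y := by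
        field_simp
      rw [hinv]
      have hg : 0 < Gd y := gd_pos hy
      have hs : 0 < Real.sinh y := Real.sinh_pos_iff.mpr hy
      nlinarith [mul_pos (mul_pos hg hc) hs]
  have := key (Set.self_mem_Ici) (Set.mem_Ici.mpr hx.le) hx
  simp [gd_zero] at this
  linarith

lemma f_anti : StrictAntiOn (fun x : ℝ => Gd x / Real.sinh x) (Set.Ioi 0) := by
  apply strictAntiOn_of_deriv_neg (convex_Ioi 0)
  · apply ContinuousOn.div gd_cont.continuousOn Real.continuous_sinh.continuousOn
    intro y hy
    exact ne_of_gt (Real.sinh_pos_iff.mpr hy)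
  · intro y hy
    rw [interior_Ioi, Set.mem_Ioi] at hy
    have hs : 0 < Real.sinh y := Real.sinh_pos_iff.mpr hy
    have hd : HasDerivAt (fun x : ℝ => Gd x / Real.sinh x)
        (((Real.cosh y)⁻¹ * Real.sinh y - Gd y * Real.cosh y) / Real.sinh y ^ 2) y :=
      (gd_deriv y).div (Real.hasDerivAt_sinh y) hs.ne'
    rw [hd.deriv]
    apply div_neg_of_neg_of_pos _ (by positivity)
    have hc : 0 < Real.cosh y := Real.cosh_pos y
    have hh := h_neg hy
    -- (1/c)s - Gd c = (s - Gd c²)/c < 0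
    have : (Real.cosh y)⁻¹ * Real.sinh y - Gd y * Real.cosh y
        = (Real.sinh y - Gd y * Real.cosh y ^ 2) / Real.cosh y := by
      field_simp
    rw [this]
    exact div_neg_of_neg_of_pos hh hc

/-- (a) `D(λ) → 0` as `λ → 0` with `D(λ) = (2/3)λ² + O(λ⁴)`; (b) `D` is monotonically
increasing on `(0,∞)`; (c) `D(λ) → 2` as `λ → ∞`. -/
theorem envelope_bound_properties :
    (Tendsto Denv (nhdsWithin 0 {0}ᶜ) (nhds 0)
      ∧ (fun l : ℝ => Denv l - (2 / 3) * l ^ 2) =O[nhdsWithin 0 {0}ᶜ] fun l : ℝ => l ^ 4)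
    ∧ StrictMonoOn Denv (Set.Ioi 0)
    ∧ Tendsto Denv atTop (nhds 2) := by
  have hbigO : (fun l : ℝ => Denv l - (2 / 3) * l ^ 2) =O[nhdsWithin 0 {0}ᶜ] fun l : ℝ => l ^ 4 := by
    rw [Asymptotics.isBigO_iff]
    refine ⟨2, ?_⟩
    have hev : ∀ᶠ (l : ℝ) in nhdsWithin 0 {0}ᶜ, |l - 0| < 1 :=
      eventually_nhdsWithin_of_eventually_nhds (eventually_abs_sub_lt 0 one_pos)
    filter_upwards [hev, self_mem_nhdsWithin] with l hl hl0
    rw [sub_zero] at hl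
    have hl0' : l ≠ 0 := hl0
    have hx : 0 < |l| := abs_pos.mpr hl0'
    have hs : 0 < Real.sinh |l| := Real.sinh_pos_iff.mpr hx
    have hlow := gd_lower (x := |l|) hx.le
    have hup := gd_upper (x := |l|) hx.le hl.le
    have hdivlow : 1 - |l| ^ 2 / 3 ≤ Gd |l| / Real.sinh |l| := by
      rw [le_div_iff₀ hs]; linarith
    have hdivup : Gd |l| / Real.sinh |l| ≤ 1 - |l| ^ 2 / 3 + |l| ^ 4 := by
      rw [div_le_iff₀ hs]; linarith
    have hsq : |l| ^ 2 = l ^ 2 := sq_abs l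
    have hq : |l| ^ 4 = l ^ 4 := by
      rw [show (4:ℕ) = 2*2 from rfl, pow_mul, pow_mul, hsq]
    have h4 : 0 ≤ l ^ 4 := by positivity
    rw [Real.norm_eq_abs, Real.norm_eq_abs, abs_of_nonneg h4, abs_le]
    unfold Denv
    constructor <;> nlinarith [hdivlow, hdivup]
  have htend0 : Tendsto Denv (nhdsWithin 0 {0}ᶜ) (nhds 0) := by
    have h1 : Tendsto (fun l : ℝ => Denv l - (2 / 3) * l ^ 2) (nhdsWithin 0 {0}ᶜ) (nhds 0) := by
      apply hbigO.trans_tendsto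
      have : Tendsto (fun l : ℝ => l ^ 4) (nhds 0) (nhds 0) := by
        simpa using (continuous_pow 4).tendsto (0 : ℝ)
      exact this.mono_left nhdsWithin_le_nhds
    have h2 : Tendsto (fun l : ℝ => (2 / 3 : ℝ) * l ^ 2) (nhdsWithin 0 {0}ᶜ) (nhds 0) := by
      have : Tendsto (fun l : ℝ => (2 / 3 : ℝ) * l ^ 2) (nhds 0) (nhds 0) := by
        have := (continuous_const.mul (continuous_pow 2) : Continuous fun l : ℝ => (2/3:ℝ) * l ^ 2).tendsto (0 : ℝ)
        simp at this
        exact this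
      exact this.mono_left nhdsWithin_le_nhds
    have := h1.add h2
    simpa using this
  refine ⟨⟨htend0, hbigO⟩, ?_, ?_⟩
  · intro a ha b hb hab
    rw [Set.mem_Ioi] at ha hb
    have h := f_anti (Set.mem_Ioi.mpr ha) (Set.mem_Ioi.mpr hb) hab
    simp only at h
    unfold Denv
    rw [abs_of_pos ha, abs_of_pos hb]
    linarith
  · have hsinh : Tendsto Real.sinh atTop atTop := by
      apply tendsto_atTop_mono' atTop ?_ tendsto_id
      filter_upwards [eventually_ge_atTop (0:ℝ)] with x hx
      rcases hx.eq_or_lt with h | h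
      · simp [← h]
      · exact (Real.self_lt_sinh_iff.mpr h).le
    have habs : Tendsto (fun l : ℝ => Real.sinh |l|) atTop atTop :=
      hsinh.comp tendsto_abs_atTop_atTop
    have hg : Tendsto (fun l : ℝ => Gd |l| / Real.sinh |l|) atTop (nhds 0) := by
      apply tendsto_of_tendsto_of_tendsto_of_le_of_le'
        (tendsto_const_nhds : Tendsto (fun _ : ℝ => (0:ℝ)) atTop (nhds 0))
        (Tendsto.div_atTop (tendsto_const_nhds (x := Real.pi / 2)) habs)
      · filter_upwards [eventually_ge_atTop (1:ℝ)] with l hl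
        have hx : 0 < |l| := by positivity
        have hs : 0 < Real.sinh |l| := Real.sinh_pos_iff.mpr hx
        exact div_nonneg (gd_nonneg hx.le) hs.le
      · filter_upwards [eventually_ge_atTop (1:ℝ)] with l hl
        have hx : 0 < |l| := by positivity
        have hs : 0 < Real.sinh |l| := Real.sinh_pos_iff.mpr hx
        exact (div_le_div_iff_of_pos_right hs).mpr (gd_lt _).le
    have := (tendsto_const_nhds (x := (1:ℝ)) (f := atTop (α := ℝ))).sub hg |>.const_mul 2
    simp at this
    exact this
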